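/- Let H = L²(X, μ_X; ℂ) and for each k ≥ 1 define operators on H by (J_k f)(x) = (−1)^{x_1+⋯+x_{k−1}+1} · i · f(x+δ_k) and (J'_k f)(x) = (−1)^{x_k} · i · (J_k f)(x) (these are well defined since translation by δ_k preserves μ_X). Then the only closed complex subspaces of H invariant under J_k and J'_k for all k ≥ 1 are {0} and H. -/

import Mathlib

/-!
Common setup: `GWX` is the compact abelian group `X = ∏_{k ≥ 1} {0,1}` of 0-1 sequences
(with componentwise addition mod 2 and the product σ-algebra, which is generated by the
sets `X_k = {x : x_k = 1}`).  The coordinate `i : ℕ` of `x : GWX` represents the paper's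
coordinate `x_{i+1}`, so the Lean index `k : ℕ` corresponds to the paper's index `k + 1`
throughout; in particular the paper's sign `(-1)^k` becomes `(-1)^(k+1)` here.
-/

open MeasureTheory Complex Filter
open scoped ENNReal

noncomputable section

abbrev GWX : Type := ℕ → ZMod 2

/-- `δ_k`: the sequence with `1` in the `k`-th place (the paper's `(k+1)`-th place)
and `0` elsewhere. -/
def gwDelta (k : ℕ) : GWX := fun i => if i = k then 1 else 0

/-- The componentwise complement `x ↦ 1 - x`. -/
def gwFlip (x : GWX) : GWX := fun i => 1 - x i

/-- The sign `(-1)^{x_1 + ⋯ + x_{k-1} + 1}` of the paper, for the paper's index `k + 1`. -/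
def gwSign (k : ℕ) (x : GWX) : ℂ := (-1 : ℂ) ^ ((∑ i ∈ Finset.range k, (x i).val) + 1)

open Set

namespace GWaux

lemma zmod2_cases (v : ZMod 2) : v = 0 ∨ v = 1 := by revert v; decide

lemma zmod2_val0 : (0 : ZMod 2).val = 0 := rfl
lemma zmod2_val1 : (1 : ZMod 2).val = 1 := rfl

lemma measurable_zmod2 {β : Type*} [MeasurableSpace β] (f : ZMod 2 → β) : Measurable f :=
  measurable_of_countable f

lemma measurable_addRight (y : GWX) : Measurable fun x : GWX => x + y :=
  measurable_pi_lambda _ fun i =>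
    (measurable_zmod2 (fun v => v + y i)).comp (measurable_pi_apply i)

lemma delta_add_delta (k : ℕ) : gwDelta k + gwDelta k = 0 := by
  funext i
  show gwDelta k i + gwDelta k i = 0
  by_cases h : i = k <;> simp [gwDelta, h] <;> decide

lemma add_delta_delta (x : GWX) (k : ℕ) : x + gwDelta k + gwDelta k = x := by
  rw [add_assoc, delta_add_delta, add_zero]

end GWaux

section Measure

variable (μ : Measure GWX) [IsProbabilityMeasure μ]

open GWaux

/-- elementary cylinder set -/
def mycyl (s : Finset ℕ) (c : GWX) : Set GWX := {x | ∀ i ∈ s, x i = c i}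

lemma measurableSet_coord (j : ℕ) (v : ZMod 2) : MeasurableSet {x : GWX | x j = v} := by
  have : {x : GWX | x j = v} = (fun x : GWX => x j) ⁻¹' {v} := by ext x; simp
  rw [this]; exact measurable_pi_apply j (measurableSet_singleton v)

lemma measurableSet_mycyl (s : Finset ℕ) (c : GWX) : MeasurableSet (mycyl s c) := by
  have : mycyl s c = ⋂ i ∈ s, {x : GWX | x i = c i} := by
    ext x; simp [mycyl]
  rw [this]
  exact MeasurableSet.biInter s.countable_toSet fun i _ => measurableSet_coord i (c i)

lemma mp (hHaar : ∀ y : GWX, μ.map (· + y) = μ) (y : GWX) : MeasurePreserving (· + y) μ μ :=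
  ⟨measurable_addRight y, hHaar y⟩

lemma meas_pre (hHaar : ∀ y : GWX, μ.map (· + y) = μ) (y : GWX) {A : Set GWX}
    (hA : MeasurableSet A) :
    μ ((· + y) ⁻¹' A) = μ A :=
  (mp μ hHaar y).measure_preimage hA.nullMeasurableSet

lemma mycyl_inter_inv (hHaar : ∀ y : GWX, μ.map (· + y) = μ) (F : Set GWX) (hF : MeasurableSet F)
    (hFinv : ∀ k : ℕ, (· + gwDelta k) ⁻¹' F = F) :
    ∀ s : Finset ℕ, ∀ c : GWX, μ (mycyl s c ∩ F) = (2 ^ s.card : ℝ≥0∞)⁻¹ * μ F := by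
  intro s
  induction s using Finset.induction_on with
  | empty =>
    intro c
    have : mycyl ∅ c = Set.univ := by ext x; simp [mycyl]
    simp [this]
  | @insert j s hj IH =>
    intro c
    set A : Set GWX := mycyl s c ∩ F with hA
    have hAmeas : MeasurableSet A := (measurableSet_mycyl s c).inter hF
    have hSmeas : ∀ v : ZMod 2, MeasurableSet {x : GWX | x j = v} := fun v =>
      measurableSet_coord j v
    have hpre : ∀ v : ZMod 2,
        (· + gwDelta j) ⁻¹' ({x : GWX | x j = v} ∩ A) = {x : GWX | x j = v + 1} ∩ A := by
      intro v
      have h1 : (· + gwDelta j) ⁻¹' {x : GWX | x j = v} = {x : GWX | x j = v + 1} := by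
        ext x
        have : (x + gwDelta j) j = x j + 1 := by simp [gwDelta]
        simp only [Set.mem_preimage, Set.mem_setOf_eq, this]
        constructor
        · intro h; rw [← h]; rw [add_assoc]; norm_num; decide
        · intro h; rw [h, add_assoc]; norm_num; decide
      have h2 : (· + gwDelta j) ⁻¹' (mycyl s c) = mycyl s c := by
        ext x
        simp only [Set.mem_preimage, mycyl, Set.mem_setOf_eq]
        constructor <;> intro h i hi <;> have hij : i ≠ j := fun h' => hj (h' ▸ hi) <;>
          have hx : (x + gwDelta j) i = x i := by simp [gwDelta, hij]
        · rw [← hx]; exact h i hi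
        · rw [hx]; exact h i hi
      rw [Set.preimage_inter, h1, hA, Set.preimage_inter, h2, hFinv j]
    have heq : ∀ v : ZMod 2, μ ({x : GWX | x j = v + 1} ∩ A) = μ ({x : GWX | x j = v} ∩ A) := by
      intro v
      rw [← hpre v]
      exact meas_pre μ hHaar _ ((hSmeas v).inter hAmeas)
    have hcover : ({x : GWX | x j = c j} ∩ A) ∪ ({x : GWX | x j = c j + 1} ∩ A) = A := by
      ext x
      simp only [Set.mem_union, Set.mem_inter_iff, Set.mem_setOf_eq]
      have : x j = c j ∨ x j = c j + 1 := by
        rcases zmod2_cases (x j) with h | h <;> rcases zmod2_cases (c j) with h' | h' <;>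
          simp [h, h'] <;> decide
      tauto
    have hdisj : Disjoint ({x : GWX | x j = c j} ∩ A) ({x : GWX | x j = c j + 1} ∩ A) := by
      rw [Set.disjoint_left]
      rintro x ⟨h1, -⟩ ⟨h2, -⟩
      have : c j ≠ c j + 1 := by
        rcases zmod2_cases (c j) with h | h <;> simp [h] <;> decide
      exact this (h1 ▸ h2)
    have hsum : μ ({x : GWX | x j = c j} ∩ A) + μ ({x : GWX | x j = c j + 1} ∩ A) = μ A := by
      rw [← measure_union hdisj ((hSmeas _).inter hAmeas), hcover]
    have h2a : (2 : ℝ≥0∞) * μ ({x : GWX | x j = c j} ∩ A) = μ A := by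
      rw [two_mul]
      nth_rewrite 2 [← heq (c j)]
      exact hsum
    have hval : μ ({x : GWX | x j = c j} ∩ A) = (2:ℝ≥0∞)⁻¹ * μ A := by
      rw [← h2a, ← mul_assoc, ENNReal.inv_mul_cancel two_ne_zero ENNReal.ofNat_ne_top, one_mul]
    have hins : mycyl (insert j s) c ∩ F = {x : GWX | x j = c j} ∩ A := by
      rw [hA]
      ext x
      simp only [mycyl, Set.mem_inter_iff, Set.mem_setOf_eq, Finset.mem_insert,
        forall_eq_or_imp]
      tauto
    rw [hins, hval, IH c, Finset.card_insert_of_notMem hj, pow_succ, mul_comm ((2:ℝ≥0∞)^s.card) 2,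
      ENNReal.mul_inv (Or.inl two_ne_zero) (Or.inl ENNReal.ofNat_ne_top), mul_assoc]

end Measure

section ZeroOne

open GWaux

/-- singleton cylinder with explicit type -/
def cylS (s : Finset ℕ) (c : (i : s) → ZMod 2) : Set GWX :=
  cylinder (α := fun _ : ℕ => ZMod 2) s {c}

lemma cylS_eq (s : Finset ℕ) (c : (i : s) → ZMod 2) :
    cylS s c = mycyl s (fun i => if h : i ∈ s then c ⟨i, h⟩ else 0) := by
  ext x
  simp only [cylS, mem_cylinder, Set.mem_singleton_iff, mycyl, Set.mem_setOf_eq, funext_iff,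
    Finset.restrict_def]
  constructor
  · rintro h i hi
    simpa [hi] using h ⟨i, hi⟩
  · rintro h ⟨i, hi⟩
    simpa [hi] using h i hi

lemma measurableSet_cylS (s : Finset ℕ) (c : (i : s) → ZMod 2) : MeasurableSet (cylS s c) := by
  rw [cylS_eq]; exact measurableSet_mycyl s _

lemma inter_indep (μ : Measure GWX) [IsProbabilityMeasure μ]
    (hHaar : ∀ y : GWX, μ.map (· + y) = μ) (F : Set GWX) (hF : MeasurableSet F)
    (hFinv : ∀ k : ℕ, (· + gwDelta k) ⁻¹' F = F) :
    ∀ A : Set GWX, MeasurableSet A → μ (A ∩ F) = μ A * μ F := by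
  have hsingle : ∀ (s : Finset ℕ) (c : (i : s) → ZMod 2) (G : Set GWX), MeasurableSet G →
      (∀ k : ℕ, (· + gwDelta k) ⁻¹' G = G) →
      μ (cylS s c ∩ G) = (2 ^ s.card : ℝ≥0∞)⁻¹ * μ G := by
    intro s c G hG hGinv
    rw [cylS_eq]
    exact mycyl_inter_inv μ hHaar G hG hGinv s _
  have hcylG : ∀ (s : Finset ℕ) (S : Set ((i : s) → ZMod 2)) (G : Set GWX),
      MeasurableSet G → (∀ k : ℕ, (· + gwDelta k) ⁻¹' G = G) →
      μ (cylinder s S ∩ G) = (S.toFinite.toFinset.card : ℝ≥0∞) * ((2 ^ s.card : ℝ≥0∞)⁻¹ * μ G) := by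
    intro s S G hG hGinv
    have hfin : S.Finite := S.toFinite
    have hbU : cylinder s S ∩ G = ⋃ c ∈ hfin.toFinset, (cylS s c ∩ G) := by
      ext x
      simp only [Set.mem_iUnion, Set.mem_inter_iff, mem_cylinder, hfin.mem_toFinset, cylS,
        Set.mem_singleton_iff]
      constructor
      · rintro ⟨hx, hxG⟩; exact ⟨_, hx, rfl, hxG⟩
      · rintro ⟨c, hc, rfl, hxG⟩; exact ⟨hc, hxG⟩
    have hdisj : (hfin.toFinset : Set ((i : s) → ZMod 2)).Pairwise
        (Function.onFun Disjoint fun c => cylS s c ∩ G) := by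
      intro c hc c' hc' hne
      refine Set.disjoint_left.mpr ?_
      rintro x ⟨hx, -⟩ ⟨hx', -⟩
      rw [cylS, mem_cylinder, Set.mem_singleton_iff] at hx hx'
      exact hne (hx ▸ hx')
    rw [hbU, measure_biUnion_finset hdisj fun c _ => (measurableSet_cylS s c).inter hG,
      Finset.sum_congr rfl fun c _ => hsingle s c G hG hGinv, Finset.sum_const, nsmul_eq_mul]
  have hcylF : ∀ A ∈ measurableCylinders (fun _ : ℕ => ZMod 2),
      μ (A ∩ F) = μ A * μ F := by
    intro A hA
    obtain ⟨s, S, -, rfl⟩ := (mem_measurableCylinders A).mp hA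
    have huniv_inv : ∀ k : ℕ, (· + gwDelta k) ⁻¹' (Set.univ : Set GWX) = Set.univ := by
      intro k; ext x; simp
    have h1 := hcylG s S F hF hFinv
    have h2 := hcylG s S Set.univ MeasurableSet.univ huniv_inv
    rw [Set.inter_univ, measure_univ, mul_one] at h2
    rw [h1, h2]
    ring
  intro A hA
  have hgen : (inferInstance : MeasurableSpace GWX) =
      MeasurableSpace.generateFrom (measurableCylinders (fun _ : ℕ => ZMod 2)) :=
    generateFrom_measurableCylinders.symm
  refine MeasurableSpace.induction_on_inter (C := fun A _ => μ (A ∩ F) = μ A * μ F) hgen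
    isPiSystem_measurableCylinders ?_ ?_ ?_ ?_ A hA
  · simp
  · intro t ht
    exact hcylF t ht
  · intro t ht hind
    have hsplit : μ (t ∩ F) + μ (tᶜ ∩ F) = μ F := by
      have hd : Disjoint (t ∩ F) (tᶜ ∩ F) := by
        refine Set.disjoint_left.mpr ?_
        rintro x ⟨h1, -⟩ ⟨h2, -⟩
        exact h2 h1
      rw [← measure_union hd (ht.compl.inter hF)]
      congr 1
      ext x
      by_cases hx : x ∈ t <;> simp [hx]
    have h1 : μ (tᶜ ∩ F) = μ F - μ t * μ F := by
      rw [← hind]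
      exact ENNReal.eq_sub_of_add_eq (measure_ne_top μ _) (by rw [add_comm]; exact hsplit)
    rw [h1, measure_compl ht (measure_ne_top μ t), measure_univ,
      ENNReal.sub_mul (fun (_ : 0 < μ t) (_ : μ t < 1) => measure_ne_top μ F), one_mul]
  · intro f hdisj hmeas hind
    rw [Set.iUnion_inter, measure_iUnion (fun i j hij =>
        ((hdisj hij).mono (Set.inter_subset_left) (Set.inter_subset_left)))
        (fun i => (hmeas i).inter hF),
      measure_iUnion hdisj hmeas, ← ENNReal.tsum_mul_right]
    exact tsum_congr hind

lemma zero_or_one (μ : Measure GWX) [IsProbabilityMeasure μ]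
    (hHaar : ∀ y : GWX, μ.map (· + y) = μ) (F : Set GWX) (hF : MeasurableSet F)
    (hFinv : ∀ k : ℕ, (· + gwDelta k) ⁻¹' F = F) :
    μ F = 0 ∨ μ F = 1 := by
  have h := inter_indep μ hHaar F hF hFinv F hF
  rw [Set.inter_self] at h
  by_cases h0 : μ F = 0
  · exact Or.inl h0
  · exact Or.inr ((ENNReal.mul_eq_left h0 (measure_ne_top μ F)).mp h.symm)

end ZeroOne

section Walsh

open GWaux

def walsh (t : Finset ℕ) (x : GWX) : ℂ := ∏ i ∈ t, (-1 : ℂ) ^ (x i).val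

lemma measurable_walsh (t : Finset ℕ) : Measurable (walsh t) := by
  apply Finset.measurable_prod
  intro i _
  exact (measurable_zmod2 (fun v : ZMod 2 => (-1 : ℂ) ^ v.val)).comp (measurable_pi_apply i)

lemma walsh_norm_one (t : Finset ℕ) (x : GWX) : ‖walsh t x‖ = 1 := by
  rw [walsh]
  rw [norm_prod]
  rw [Finset.prod_eq_one]
  intro i _
  rw [norm_pow, norm_neg, norm_one, one_pow]

lemma walsh_conj (t : Finset ℕ) (x : GWX) :
    (starRingEnd ℂ) (walsh t x) = walsh t x := by
  rw [walsh, map_prod]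
  congr 1
  ext i
  rw [map_pow, map_neg, map_one]

lemma neg_one_sq_zmod (v : ZMod 2) : (-1 : ℂ) ^ v.val * (-1 : ℂ) ^ v.val = 1 := by
  rcases zmod2_cases v with h | h <;> rw [h] <;> norm_num [zmod2_val0, zmod2_val1]

lemma rad_mul_walsh (j : ℕ) (t : Finset ℕ) (x : GWX) :
    (-1 : ℂ) ^ (x j).val * walsh t x
      = walsh (if j ∈ t then t.erase j else insert j t) x := by
  by_cases h : j ∈ t
  · rw [if_pos h, walsh, walsh, ← Finset.mul_prod_erase t _ h, ← mul_assoc,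
      neg_one_sq_zmod, one_mul]
  · rw [if_neg h, walsh, walsh, Finset.prod_insert h]

def indC (s : Finset ℕ) (c : GWX) (x : GWX) : ℂ := ∏ i ∈ s, (if x i = c i then 1 else 0)

lemma measurable_indC (s : Finset ℕ) (c : GWX) : Measurable (indC s c) := by
  apply Finset.measurable_prod
  intro i _
  exact (measurable_zmod2 (fun v : ZMod 2 => if v = c i then (1:ℂ) else 0)).comp
    (measurable_pi_apply i)

lemma indC_norm_le (s : Finset ℕ) (c : GWX) (x : GWX) : ‖indC s c x‖ ≤ 1 := by
  rw [indC, norm_prod]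
  apply Finset.prod_le_one
  · intro i _; exact norm_nonneg _
  · intro i _; by_cases h : x i = c i <;> simp [h]

lemma if_eq_expand (a b : ZMod 2) :
    (if a = b then (1:ℂ) else 0) = (1 + (-1 : ℂ) ^ b.val * (-1 : ℂ) ^ a.val) / 2 := by
  rcases zmod2_cases a with h | h <;> rcases zmod2_cases b with h' | h' <;>
    rw [h, h'] <;> norm_num [zmod2_val0, zmod2_val1] <;> decide

lemma indC_eq_indicator_mul (s : Finset ℕ) (c : GWX) (h : GWX → ℂ) (x : GWX) :
    (mycyl s c).indicator h x = indC s c x * h x := by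
  by_cases hx : x ∈ mycyl s c
  · rw [Set.indicator_of_mem hx]
    have : indC s c x = 1 := by
      rw [indC, Finset.prod_eq_one]
      intro i hi
      rw [if_pos (hx i hi)]
    rw [this, one_mul]
  · rw [Set.indicator_of_notMem hx]
    obtain ⟨i, hi, hne⟩ : ∃ i ∈ s, x i ≠ c i := by
      by_contra hcon
      push_neg at hcon
      exact hx hcon
    have : indC s c x = 0 := Finset.prod_eq_zero hi (by rw [if_neg hne])
    rw [this, zero_mul]

lemma walsh_vanish (μ : Measure GWX) [IsProbabilityMeasure μ] (h : GWX → ℂ)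
    (hint : Integrable h μ)
    (hw : ∀ t : Finset ℕ, ∫ x, walsh t x * h x ∂μ = 0) :
    h =ᵐ[μ] 0 := by
  -- integrability of all the auxiliary integrands
  have hint2 : ∀ (s : Finset ℕ) (c : GWX) (t : Finset ℕ),
      Integrable (fun x => indC s c x * (walsh t x * h x)) μ := by
    intro s c t
    have : (fun x => indC s c x * (walsh t x * h x))
        = fun x => (indC s c x * walsh t x) * h x := by
      funext x; ring
    rw [this]
    apply hint.bdd_mul (c := 1) ((measurable_indC s c).mul (measurable_walsh t)).aestronglyMeasurable
    refine Filter.Eventually.of_forall fun x => ?_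
    rw [Pi.mul_apply, norm_mul, walsh_norm_one, mul_one]
    exact indC_norm_le s c x
  -- the main inductive claim
  have main : ∀ (s : Finset ℕ) (t : Finset ℕ) (c : GWX),
      ∫ x, indC s c x * (walsh t x * h x) ∂μ = 0 := by
    intro s
    induction s using Finset.induction_on with
    | empty =>
      intro t c
      have : ∀ x, indC ∅ c x * (walsh t x * h x) = walsh t x * h x := by
        intro x; rw [indC, Finset.prod_empty, one_mul]
      rw [integral_congr_ae (Filter.Eventually.of_forall fun x => this x)]
      exact hw t
    | @insert j s hj IH =>
      intro t c
      set t' := if j ∈ t then t.erase j else insert j t with ht'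
      have hpoint : ∀ x, indC (insert j s) c x * (walsh t x * h x)
          = (2⁻¹ : ℂ) * (indC s c x * (walsh t x * h x))
            + ((-1 : ℂ) ^ (c j).val * 2⁻¹) * (indC s c x * (walsh t' x * h x)) := by
        intro x
        rw [indC, Finset.prod_insert hj, if_eq_expand, ← indC]
        have hw' : walsh t' x = (-1 : ℂ) ^ (x j).val * walsh t x := (rad_mul_walsh j t x).symm
        rw [hw']
        have hsq := neg_one_sq_zmod (x j)
        field_simp
      rw [integral_congr_ae (Filter.Eventually.of_forall hpoint),
        integral_add ((hint2 s c t).const_mul _) ((hint2 s c t').const_mul _),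
        integral_const_mul, integral_const_mul, IH t c, IH t' c]
      simp
  -- set integrals over cylinders vanish
  have hcyl : ∀ (s : Finset ℕ) (c : GWX), ∫ x in mycyl s c, h x ∂μ = 0 := by
    intro s c
    rw [← integral_indicator (measurableSet_mycyl s c),
      integral_congr_ae (Filter.Eventually.of_forall (indC_eq_indicator_mul s c h))]
    have := main s ∅ c
    have heq : ∀ x, indC s c x * (walsh ∅ x * h x) = indC s c x * h x := by
      intro x; rw [walsh, Finset.prod_empty, one_mul]
    rw [integral_congr_ae (Filter.Eventually.of_forall heq)] at this
    exact this
  -- extend to all measurable sets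
  have hall : ∀ ⦃A : Set GWX⦄, MeasurableSet A → ∫ x in A, h x ∂μ = 0 := by
    have hgen : (inferInstance : MeasurableSpace GWX) =
        MeasurableSpace.generateFrom (measurableCylinders (fun _ : ℕ => ZMod 2)) :=
      generateFrom_measurableCylinders.symm
    refine MeasurableSpace.induction_on_inter
      (C := fun A _ => ∫ x in A, h x ∂μ = 0) hgen isPiSystem_measurableCylinders ?_ ?_ ?_ ?_
    · simp
    · intro A hA
      obtain ⟨s, S, -, rfl⟩ := (mem_measurableCylinders A).mp hA
      have hfin : S.Finite := S.toFinite
      have hbU : cylinder s S = ⋃ c ∈ hfin.toFinset, cylS s c := by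
        ext x
        simp only [Set.mem_iUnion, mem_cylinder, hfin.mem_toFinset, cylS,
          Set.mem_singleton_iff]
        constructor
        · intro hx; exact ⟨_, hx, rfl⟩
        · rintro ⟨c, hc, rfl⟩; exact hc
      have hdisj : (hfin.toFinset : Set ((i : s) → ZMod 2)).Pairwise
          (Function.onFun Disjoint fun c => cylS s c) := by
        intro c hc c' hc' hne
        refine Set.disjoint_left.mpr ?_
        intro x hx hx'
        simp only [cylS, mem_cylinder, Set.mem_singleton_iff] at hx hx'
        exact hne (hx ▸ hx')
      rw [hbU, integral_biUnion_finset hfin.toFinset (fun c _ => measurableSet_cylS s c) hdisj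
        (fun c _ => hint.integrableOn)]
      refine Finset.sum_eq_zero fun c _ => ?_
      rw [cylS_eq]
      exact hcyl s _
    · intro A hA hind
      have := integral_add_compl hA hint
      rw [hind, zero_add] at this
      rw [this]
      have h0 : ∫ x, h x ∂μ = 0 := by
        have := hw ∅
        have heq : ∀ x, walsh ∅ x * h x = h x := by
          intro x; rw [walsh, Finset.prod_empty, one_mul]
        rwa [integral_congr_ae (Filter.Eventually.of_forall heq)] at this
      exact h0
    · intro f hdisj hmeas hind
      rw [integral_iUnion hmeas hdisj hint.integrableOn]
      simp only [hind]
      exact tsum_zero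
  exact hint.ae_eq_zero_of_forall_setIntegral_eq_zero
    fun A hA _ => hall hA

end Walsh

namespace GWaux

lemma gwSign_add_delta (k : ℕ) (x : GWX) : gwSign k (x + gwDelta k) = gwSign k x := by
  unfold gwSign
  congr 2
  apply Finset.sum_congr rfl
  intro i hi
  have hik : i ≠ k := Nat.ne_of_lt (Finset.mem_range.mp hi)
  have : (x + gwDelta k) i = x i := by simp [gwDelta, hik]
  rw [this]

lemma gwSign_mul_self (k : ℕ) (x : GWX) : gwSign k x * gwSign k x = 1 := by
  unfold gwSign
  rw [← pow_add]
  exact Even.neg_one_pow ⟨_, rfl⟩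

lemma walsh_mul_gwSign (k : ℕ) (x : GWX) :
    walsh (Finset.range k) x * gwSign k x = -1 := by
  unfold walsh gwSign
  rw [Finset.prod_pow_eq_pow_sum, ← pow_add]
  have : (∑ i ∈ Finset.range k, (x i).val) + ((∑ i ∈ Finset.range k, (x i).val) + 1)
      = 2 * (∑ i ∈ Finset.range k, (x i).val) + 1 := by ring
  rw [this, pow_succ, pow_mul]
  norm_num

end GWaux

open GWaux

/-- the Gårding–Wightman representation with triple `(μ_X, 1, 1)`, where `μ_X`
is the Haar probability measure on `X` (characterized here as a translation-invariant
probability measure), given by `(J_k f)(x) = (-1)^{x_1+⋯+x_{k-1}+1} i f(x+δ_k)` and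
`(J'_k f)(x) = (-1)^{x_k} i (J_k f)(x)`, admits no nontrivial closed invariant complex
subspace. -/
theorem haar_gw_irreducible_complex
    (μX : Measure GWX) [IsProbabilityMeasure μX]
    (hHaar : ∀ y : GWX, μX.map (· + y) = μX)
    (J J' : ℕ → Lp ℂ 2 μX → Lp ℂ 2 μX)
    (hJ : ∀ k f, (↑(J k f) : GWX → ℂ) =ᵐ[μX] fun x =>
      gwSign k x * Complex.I * (↑f : GWX → ℂ) (x + gwDelta k))
    (hJ' : ∀ k f, (↑(J' k f) : GWX → ℂ) =ᵐ[μX] fun x =>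
      (-1 : ℂ) ^ (x k).val * Complex.I * (↑(J k f) : GWX → ℂ) x) :
    ∀ V : Submodule ℂ (Lp ℂ 2 μX), IsClosed (V : Set (Lp ℂ 2 μX)) →
      (∀ k : ℕ, ∀ f ∈ V, J k f ∈ V ∧ J' k f ∈ V) →
      V = ⊥ ∨ V = ⊤ := by
  intro V hVclosed hVinv
  by_contra hcon
  push_neg at hcon
  obtain ⟨hVbot, hVtop⟩ := hcon
  have mpz : ∀ y : GWX, MeasurePreserving (· + y) μX μX := fun y =>
    ⟨measurable_addRight y, hHaar y⟩
  have qmp : ∀ y : GWX, Measure.QuasiMeasurePreserving (· + y) μX μX := fun y =>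
    (mpz y).quasiMeasurePreserving
  -- V is stable under multiplication by the Rademacher functions
  have hVmul : ∀ f : Lp ℂ 2 μX, f ∈ V → ∀ k : ℕ, ∃ g ∈ V,
      (↑g : GWX → ℂ) =ᵐ[μX] fun x => (-1 : ℂ) ^ ((x k).val) * (↑f : GWX → ℂ) x := by
    intro f hf k
    refine ⟨Complex.I • (J' k (J k f)), V.smul_mem _ (hVinv k _ (hVinv k f hf).1).2, ?_⟩
    have hc := (qmp (gwDelta k)).ae_eq_comp (hJ k f)
    have hc' : (fun x => (↑(J k f) : GWX → ℂ) (x + gwDelta k)) =ᵐ[μX]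
        fun x => gwSign k x * Complex.I * (↑f : GWX → ℂ) x := by
      refine hc.trans (Filter.Eventually.of_forall fun x => ?_)
      simp only [Function.comp_apply]
      rw [add_delta_delta, gwSign_add_delta]
    have hJJ : (↑(J k (J k f)) : GWX → ℂ) =ᵐ[μX] fun x => -((↑f : GWX → ℂ) x) := by
      filter_upwards [hJ k (J k f), hc'] with x h1 h2
      rw [h1, h2]
      have hs := gwSign_mul_self k x
      linear_combination (Complex.I ^ 2 * ((↑f : GWX → ℂ) x)) * hs
        + ((↑f : GWX → ℂ) x) * Complex.I_sq
    refine (Lp.coeFn_smul Complex.I _).trans ?_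
    filter_upwards [hJ' k (J k f), hJJ] with x h1 h2
    rw [Pi.smul_apply, smul_eq_mul, h1, h2]
    linear_combination (-((-1 : ℂ) ^ ((x k).val) * ((↑f : GWX → ℂ) x))) * Complex.I_sq
  -- V is stable under multiplication by Walsh functions
  have hVwalsh : ∀ f : Lp ℂ 2 μX, f ∈ V → ∀ t : Finset ℕ, ∃ g ∈ V,
      (↑g : GWX → ℂ) =ᵐ[μX] fun x => walsh t x * (↑f : GWX → ℂ) x := by
    intro f hf t
    induction t using Finset.induction_on with
    | empty =>
      refine ⟨f, hf, Filter.Eventually.of_forall fun x => ?_⟩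
      simp [walsh]
    | @insert j t hj IH =>
      obtain ⟨g, hgV, hg⟩ := IH
      obtain ⟨g', hg'V, hg'⟩ := hVmul g hgV j
      refine ⟨g', hg'V, ?_⟩
      filter_upwards [hg', hg] with x h1 h2
      rw [h1, h2]
      have : walsh (insert j t) x = (-1 : ℂ) ^ ((x j).val) * walsh t x := by
        simp only [walsh]
        rw [Finset.prod_insert hj]
      rw [this]
      ring
  -- V is stable under translation by δ_k
  have hVtrans : ∀ f : Lp ℂ 2 μX, f ∈ V → ∀ k : ℕ, ∃ g ∈ V,
      (↑g : GWX → ℂ) =ᵐ[μX] fun x => (↑f : GWX → ℂ) (x + gwDelta k) := by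
    intro f hf k
    obtain ⟨g1, hg1V, hg1⟩ := hVwalsh (J k f) (hVinv k f hf).1 (Finset.range k)
    refine ⟨Complex.I • g1, V.smul_mem _ hg1V, ?_⟩
    refine (Lp.coeFn_smul Complex.I g1).trans ?_
    filter_upwards [hg1, hJ k f] with x h1 h2
    rw [Pi.smul_apply, smul_eq_mul, h1, h2]
    have h3 := walsh_mul_gwSign k x
    linear_combination (Complex.I ^ 2 * ((↑f : GWX → ℂ) (x + gwDelta k))) * h3
      + (-((↑f : GWX → ℂ) (x + gwDelta k))) * Complex.I_sq
  -- V is stable under translation by sums of δ's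
  have hVtransFin : ∀ f : Lp ℂ 2 μX, f ∈ V → ∀ u : Finset ℕ, ∃ g ∈ V,
      (↑g : GWX → ℂ) =ᵐ[μX] fun x => (↑f : GWX → ℂ) (x + ∑ i ∈ u, gwDelta i) := by
    intro f hf u
    induction u using Finset.induction_on with
    | empty =>
      refine ⟨f, hf, Filter.Eventually.of_forall fun x => ?_⟩
      simp
    | @insert j u hj IH =>
      obtain ⟨g, hgV, hg⟩ := IH
      obtain ⟨g', hg'V, hg'⟩ := hVtrans g hgV j
      refine ⟨g', hg'V, ?_⟩
      have hcomp := (qmp (gwDelta j)).ae_eq_comp hg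
      filter_upwards [hg', hcomp] with x h1 h2
      simp only [Function.comp_apply] at h2
      rw [h1, h2, Finset.sum_insert hj, ← add_assoc]
  -- combination
  have hVboth : ∀ f : Lp ℂ 2 μX, f ∈ V → ∀ u t : Finset ℕ, ∃ a ∈ V,
      (↑a : GWX → ℂ) =ᵐ[μX]
        fun x => walsh t x * (↑f : GWX → ℂ) (x + ∑ i ∈ u, gwDelta i) := by
    intro f hf u t
    obtain ⟨g, hgV, hg⟩ := hVtransFin f hf u
    obtain ⟨a, haV, ha⟩ := hVwalsh g hgV t
    refine ⟨a, haV, ?_⟩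
    filter_upwards [ha, hg] with x h1 h2
    rw [h1, h2]
  -- pick nonzero elements of V and Vᗮ
  obtain ⟨f, hfV, hfne⟩ := Submodule.exists_mem_ne_zero_of_ne_bot hVbot
  haveI : CompleteSpace V := hVclosed.completeSpace_coe
  have hVorthbot : Vᗮ ≠ ⊥ := fun h => hVtop (Submodule.orthogonal_eq_bot_iff.mp h)
  obtain ⟨g, hgOrth, hgne⟩ := Submodule.exists_mem_ne_zero_of_ne_bot hVorthbot
  set y : Finset ℕ → GWX := fun u => ∑ i ∈ u, gwDelta i with hy
  set fU : Finset ℕ → Lp ℂ 2 μX := fun u =>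
    Lp.compMeasurePreserving (· + y u) (mpz (y u)) f with hfU
  have hfUcoe : ∀ u : Finset ℕ,
      (↑(fU u) : GWX → ℂ) =ᵐ[μX] fun x => (↑f : GWX → ℂ) (x + y u) :=
    fun u => Lp.coeFn_compMeasurePreserving f (mpz (y u))
  have hzero : ∀ u t : Finset ℕ,
      ∫ x, walsh t x * ((starRingEnd ℂ) ((↑(fU u) : GWX → ℂ) x) * (↑g : GWX → ℂ) x) ∂μX
        = 0 := by
    intro u t
    obtain ⟨a, haV, ha⟩ := hVboth f hfV u t
    have hinner : (inner ℂ a g : ℂ) = 0 := Submodule.inner_right_of_mem_orthogonal haV hgOrth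
    rw [L2.inner_def] at hinner
    rw [← hinner]
    apply integral_congr_ae
    filter_upwards [ha, hfUcoe u] with x h1 h2
    rw [RCLike.inner_apply, h1, map_mul, walsh_conj, h2]
    ring
  have hInt : ∀ u : Finset ℕ,
      Integrable (fun x => (starRingEnd ℂ) ((↑(fU u) : GWX → ℂ) x) * (↑g : GWX → ℂ) x) μX := by
    intro u
    have := L2.integrable_inner (𝕜 := ℂ) (fU u) g
    simpa [RCLike.inner_apply, mul_comm] using this
  have hae : ∀ u : Finset ℕ,
      (fun x => (starRingEnd ℂ) ((↑(fU u) : GWX → ℂ) x) * (↑g : GWX → ℂ) x) =ᵐ[μX] 0 :=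
    fun u => walsh_vanish μX _ (hInt u) (hzero u)
  -- measurable representatives
  set fm : GWX → ℂ := (Lp.aestronglyMeasurable f).mk ↑f with hfmdef
  have hfm : StronglyMeasurable fm := (Lp.aestronglyMeasurable f).stronglyMeasurable_mk
  have hfmae : (↑f : GWX → ℂ) =ᵐ[μX] fm := (Lp.aestronglyMeasurable f).ae_eq_mk
  set gm : GWX → ℂ := (Lp.aestronglyMeasurable g).mk ↑g with hgmdef
  have hgm : StronglyMeasurable gm := (Lp.aestronglyMeasurable g).stronglyMeasurable_mk
  have hgmae : (↑g : GWX → ℂ) =ᵐ[μX] gm := (Lp.aestronglyMeasurable g).ae_eq_mk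
  set Eset : Set GWX := {x | fm x ≠ 0} with hEdef
  have hEmeas : MeasurableSet Eset := by
    have : Eset = fm ⁻¹' ({0}ᶜ) := by ext x; simp [hEdef]
    rw [this]
    exact hfm.measurable (measurableSet_singleton 0).compl
  set Gset : Set GWX := {x | gm x ≠ 0} with hGdef
  have hGmeas : MeasurableSet Gset := by
    have : Gset = gm ⁻¹' ({0}ᶜ) := by ext x; simp [hGdef]
    rw [this]
    exact hgm.measurable (measurableSet_singleton 0).compl
  -- each translated copy of Eset misses Gset
  have hnull : ∀ u : Finset ℕ, μX ((· + y u) ⁻¹' Eset ∩ Gset) = 0 := by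
    intro u
    have hcomp : (fun x => (↑f : GWX → ℂ) (x + y u)) =ᵐ[μX] fun x => fm (x + y u) := by
      have := (qmp (y u)).ae_eq_comp hfmae
      filter_upwards [this] with x hx
      simpa only [Function.comp_apply] using hx
    have hkey : (fun x => (starRingEnd ℂ) (fm (x + y u)) * gm x) =ᵐ[μX] 0 := by
      filter_upwards [hae u, hfUcoe u, hcomp, hgmae] with x h1 h2 h3 h4
      simp only [Pi.zero_apply] at h1 ⊢
      rw [← h4, ← h3, ← h2]
      exact h1
    rw [measure_eq_zero_iff_ae_notMem]
    filter_upwards [hkey] with x hx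
    rintro ⟨hxE, hxG⟩
    simp only [Set.mem_preimage, hEdef, Set.mem_setOf_eq] at hxE
    simp only [hGdef, Set.mem_setOf_eq] at hxG
    simp only [Pi.zero_apply] at hx
    rcases mul_eq_zero.mp hx with h | h
    · exact hxE (by rwa [show (starRingEnd ℂ) (fm (x + y u)) = star (fm (x + y u)) from rfl,
        star_eq_zero] at h)
    · exact hxG h
  -- the big invariant set
  set Fbig : Set GWX := ⋃ u : Finset ℕ, (· + y u) ⁻¹' Eset with hFdef
  have hFmeas : MeasurableSet Fbig :=
    MeasurableSet.iUnion fun u => (measurable_addRight (y u)) hEmeas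
  have hyσ : ∀ (k : ℕ) (u : Finset ℕ),
      gwDelta k + y u = y (if k ∈ u then u.erase k else insert k u) := by
    intro k u
    by_cases h : k ∈ u
    · rw [if_pos h, hy]
      simp only []
      have := Finset.add_sum_erase u gwDelta h
      rw [← this, ← add_assoc, delta_add_delta, zero_add]
    · rw [if_neg h, hy]
      simp only []
      rw [Finset.sum_insert h]
  have hterm : ∀ (k : ℕ) (u : Finset ℕ),
      (· + gwDelta k) ⁻¹' ((· + y u) ⁻¹' Eset)
        = (· + y (if k ∈ u then u.erase k else insert k u)) ⁻¹' Eset := by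
    intro k u
    ext x
    simp only [Set.mem_preimage]
    rw [add_assoc, hyσ k u]
  have hFinv : ∀ k : ℕ, (· + gwDelta k) ⁻¹' Fbig = Fbig := by
    intro k
    have hσσ : ∀ u : Finset ℕ,
        (if k ∈ (if k ∈ u then u.erase k else insert k u)
          then (if k ∈ u then u.erase k else insert k u).erase k
          else insert k (if k ∈ u then u.erase k else insert k u)) = u := by
      intro u
      by_cases h : k ∈ u
      · rw [if_pos h, if_neg (Finset.notMem_erase k u), Finset.insert_erase h]
      · rw [if_neg h, if_pos (Finset.mem_insert_self k u), Finset.erase_insert h]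
    rw [hFdef, Set.preimage_iUnion]
    apply Set.Subset.antisymm
    · refine Set.iUnion_subset fun u => ?_
      rw [hterm k u]
      exact Set.subset_iUnion (fun u => (· + y u) ⁻¹' Eset) _
    · refine Set.iUnion_subset fun u => ?_
      have h1 := hterm k (if k ∈ u then u.erase k else insert k u)
      rw [hσσ u] at h1
      rw [← h1]
      exact Set.subset_iUnion
        (fun v => (· + gwDelta k) ⁻¹' ((· + y v) ⁻¹' Eset)) _
  -- positivity of μ Eset
  have hEpos : μX Eset ≠ 0 := by
    intro h0
    apply hfne
    apply Lp.ext (p := (2 : ℝ≥0∞)) (μ := μX)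
    have hfz : (↑f : GWX → ℂ) =ᵐ[μX] 0 := by
      have : ∀ᵐ x ∂μX, x ∉ Eset := measure_eq_zero_iff_ae_notMem.mp h0
      filter_upwards [this, hfmae] with x hx1 hx2
      simp only [hEdef, Set.mem_setOf_eq, not_not] at hx1
      simp [hx2, hx1]
    exact hfz.trans (Lp.coeFn_zero ℂ 2 μX).symm
  have hEsub : Eset ⊆ Fbig := by
    intro x hx
    rw [hFdef]
    refine Set.mem_iUnion.mpr ⟨∅, ?_⟩
    simp only [Set.mem_preimage, hy, Finset.sum_empty, add_zero]
    exact hx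
  have hFone : μX Fbig = 1 := by
    rcases zero_or_one μX hHaar Fbig hFmeas hFinv with h | h
    · exact absurd (measure_mono_null hEsub h) hEpos
    · exact h
  -- conclude g = 0
  have hGnull : μX Gset = 0 := by
    have h1 : μX (Fbig ∩ Gset) = 0 := by
      rw [hFdef, Set.iUnion_inter]
      exact measure_iUnion_null fun u => hnull u
    have h2 : μX Fbigᶜ = 0 := by
      rw [measure_compl hFmeas (measure_ne_top _ _), hFone, measure_univ, tsub_self]
    have hsub : Gset ⊆ (Fbig ∩ Gset) ∪ Fbigᶜ := by
      intro x hx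
      by_cases hxF : x ∈ Fbig
      · exact Or.inl ⟨hxF, hx⟩
      · exact Or.inr hxF
    have : μX Gset ≤ μX (Fbig ∩ Gset) + μX Fbigᶜ :=
      (measure_mono hsub).trans (measure_union_le _ _)
    rw [h1, h2, add_zero] at this
    exact le_antisymm this zero_le
  apply hgne
  apply Lp.ext (p := (2 : ℝ≥0∞)) (μ := μX)
  have hgz : (↑g : GWX → ℂ) =ᵐ[μX] 0 := by
    have : ∀ᵐ x ∂μX, x ∉ Gset := measure_eq_zero_iff_ae_notMem.mp hGnull
    filter_upwards [this, hgmae] with x hx1 hx2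
    simp only [hGdef, Set.mem_setOf_eq, not_not] at hx1
    simp [hx2, hx1]
  exact hgz.trans (Lp.coeFn_zero ℂ 2 μX).symm
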